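/- arXiv:2505.13234 — 4 statements merged into one kernel-verified Lean document; each statement's English description precedes it below -/
import Mathlib

section
/- For a continuous piecewise C¹ path X : [a,b] → ℝ^d and any two words w₁, w₂ over {1,…,d}, the signature pairing satisfies the shuffle identity ⟨σ(X), w₁ ⧢ w₂⟩ = ⟨σ(X), w₁⟩ · ⟨σ(X), w₂⟩. -/
noncomputable def sigAux {d : ℕ} (X : ℝ → Fin d → ℝ) (a : ℝ) : List (Fin d) → ℝ → ℝ
  | [] => fun _ => 1
  | i :: w => fun t => ∫ s in a..t, sigAux X a w s * deriv (fun u => X u i) s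

/-- `sig X a w t` is the signature coefficient `⟨σ(X|[a,t]), w⟩`, the iterated integral
of the derivatives of the coordinates of `X` indexed by the word `w` (in reading order,
first letter innermost). -/
noncomputable def sig {d : ℕ} (X : ℝ → Fin d → ℝ) (a : ℝ) (w : List (Fin d)) (t : ℝ) : ℝ :=
  sigAux X a w.reverse t

/-- A continuous path, piecewise of class `C¹` on `[a,b]`. -/
def PiecewiseC1 {d : ℕ} (X : ℝ → Fin d → ℝ) (a b : ℝ) : Prop :=
  ContinuousOn X (Set.Icc a b) ∧
  ∃ (n : ℕ) (t : Fin (n + 1) → ℝ), t 0 = a ∧ t (Fin.last n) = b ∧ StrictMono t ∧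
    ∀ i : Fin n, ContDiffOn ℝ 1 X (Set.Icc (t i.castSucc) (t i.succ))

/-- The list of all shuffles (interleavings) of two words. -/
def shuffles {α : Type*} : List α → List α → List (List α)
  | [], ys => [ys]
  | xs, [] => [xs]
  | x :: xs, y :: ys =>
      (shuffles xs (y :: ys)).map (x :: ·) ++ (shuffles (x :: xs) ys).map (y :: ·)
  termination_by xs ys => xs.length + ys.length

/-- Shuffle product of two words, as an element of the free vector space on words. -/
noncomputable def shOne {α : Type*} (u v : List α) : List α →₀ ℝ :=
  ((shuffles u v).map (fun z => Finsupp.single z (1 : ℝ))).sum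

/-! ### Auxiliary combinatorial lemmas -/

@[simp] lemma shuffles_nil_left {α : Type*} (v : List α) : shuffles [] v = [v] := by
  cases v <;> simp [shuffles]

@[simp] lemma shuffles_nil_right {α : Type*} (u : List α) : shuffles u [] = [u] := by
  cases u <;> simp [shuffles]

lemma shuffles_cons_cons {α : Type*} (x y : α) (xs ys : List α) :
    shuffles (x :: xs) (y :: ys) =
      (shuffles xs (y :: ys)).map (x :: ·) ++ (shuffles (x :: xs) ys).map (y :: ·) := by
  rw [shuffles]

/-- Last-letter recursion for shuffles, as multisets. -/
lemma shuffles_concat_concat {α : Type*} (p q : List α) (x y : α) :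
    ((shuffles (p ++ [x]) (q ++ [y]) : List (List α)) : Multiset (List α)) =
      (↑((shuffles p (q ++ [y])).map (· ++ [x])) : Multiset (List α)) +
      (↑((shuffles (p ++ [x]) q).map (· ++ [y])) : Multiset (List α)) := by
  match p, q with
  | [], [] =>
      simp only [List.nil_append, shuffles_cons_cons, shuffles_nil_left, shuffles_nil_right,
        List.map_cons, List.map_nil, List.cons_append, List.nil_append, List.append_nil]
      rw [Multiset.coe_add, Multiset.coe_eq_coe]
      exact List.Perm.swap _ _ _
  | [], c :: q' =>
      have IH := shuffles_concat_concat ([] : List α) q' x y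
      simp only [List.nil_append, List.cons_append] at IH ⊢
      rw [shuffles_cons_cons x c [] (q' ++ [y]), shuffles_cons_cons x c [] q']
      simp only [List.map_append, List.map_map, List.map_cons, List.map_nil, shuffles_nil_left,
        ← Multiset.coe_add, ← Multiset.map_coe, IH]
      simp only [Multiset.map_map, Multiset.map_add, Function.comp_def, List.cons_append,
        Multiset.map_cons, Multiset.map_zero, Multiset.map_singleton, Multiset.coe_singleton,
        ← Multiset.singleton_add]
      abel
  | a :: p', [] =>
      have IH := shuffles_concat_concat p' ([] : List α) x y
      simp only [List.nil_append, List.cons_append, shuffles_nil_right] at IH ⊢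
      rw [shuffles_cons_cons a y (p' ++ [x]) [], shuffles_cons_cons a y p' []]
      simp only [List.map_append, List.map_map, List.map_cons, List.map_nil, shuffles_nil_right,
        ← Multiset.coe_add, ← Multiset.map_coe, IH]
      simp only [Multiset.map_map, Multiset.map_add, Function.comp_def, List.cons_append,
        Multiset.map_cons, Multiset.map_zero, Multiset.map_singleton, Multiset.coe_singleton,
        ← Multiset.singleton_add]
      abel
  | a :: p', c :: q' =>
      have IH1 := shuffles_concat_concat p' (c :: q') x y
      have IH2 := shuffles_concat_concat (a :: p') q' x y
      simp only [List.nil_append, List.cons_append] at IH1 IH2 ⊢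
      rw [shuffles_cons_cons a c (p' ++ [x]) (q' ++ [y]), shuffles_cons_cons a c (p' ++ [x]) q',
        shuffles_cons_cons a c p' (q' ++ [y])]
      simp only [List.map_append, List.map_map, ← Multiset.coe_add, ← Multiset.map_coe, IH1, IH2]
      simp only [Multiset.map_map, Multiset.map_add, Function.comp_def, List.cons_append,
        Multiset.coe_singleton, Multiset.map_singleton, ← Multiset.singleton_add]
      abel
  termination_by p.length + q.length

/-- Reversal of shuffles, as multisets. -/
lemma shuffles_reverse {α : Type*} (u v : List α) :
    ((shuffles u v).map List.reverse : List (List α)) =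
      (↑(shuffles u.reverse v.reverse) : Multiset (List α)) := by
  match u, v with
  | [], v => simp
  | u, [] => simp
  | x :: xs, y :: ys =>
      have IH1 := shuffles_reverse xs (y :: ys)
      have IH2 := shuffles_reverse (x :: xs) ys
      rw [shuffles_cons_cons]
      simp only [List.map_append, List.map_map, ← Multiset.coe_add, ← Multiset.map_coe]
      have h1 : (Multiset.map (List.reverse ∘ (x :: ·)) ↑(shuffles xs (y :: ys))) =
          Multiset.map (· ++ [x]) ↑(shuffles xs.reverse (y :: ys).reverse) := by
        rw [← IH1, ← Multiset.map_coe, Multiset.map_map]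
        exact Multiset.map_congr rfl (by intro z _; simp)
      have h2 : (Multiset.map (List.reverse ∘ (y :: ·)) ↑(shuffles (x :: xs) ys)) =
          Multiset.map (· ++ [y]) ↑(shuffles (x :: xs).reverse ys.reverse) := by
        rw [← IH2, ← Multiset.map_coe, Multiset.map_map]
        exact Multiset.map_congr rfl (by intro z _; simp)
      rw [h1, h2]
      rw [show (x :: xs).reverse = xs.reverse ++ [x] by simp,
        show (y :: ys).reverse = ys.reverse ++ [y] by simp]
      rw [shuffles_concat_concat]
      simp [← Multiset.map_coe]
  termination_by u.length + v.length

/-! ### Auxiliary analytic lemmas -/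

open MeasureTheory Set intervalIntegral

@[simp] lemma sigAux_nil {d : ℕ} (X : ℝ → Fin d → ℝ) (a t : ℝ) : sigAux X a [] t = 1 := rfl

lemma sigAux_cons {d : ℕ} (X : ℝ → Fin d → ℝ) (a t : ℝ) (i : Fin d) (w : List (Fin d)) :
    sigAux X a (i :: w) t = ∫ s in a..t, sigAux X a w s * deriv (fun u => X u i) s := rfl

@[simp] lemma sigAux_cons_self {d : ℕ} (X : ℝ → Fin d → ℝ) (a : ℝ) (i : Fin d) (w : List (Fin d)) :
    sigAux X a (i :: w) a = 0 := by rw [sigAux_cons, intervalIntegral.integral_same]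

section Analytic

variable {d : ℕ} {X : ℝ → Fin d → ℝ} {a b : ℝ}

lemma sigAux_contOn_and_intInt (hab : a ≤ b)
    (hfi : ∀ i, IntervalIntegrable (fun s => deriv (fun u => X u i) s) volume a b) :
    ∀ w : List (Fin d), ContinuousOn (sigAux X a w) (Icc a b) ∧
      ∀ i, IntervalIntegrable (fun s => sigAux X a w s * deriv (fun u => X u i) s) volume a b := by
  intro w
  induction w with
  | nil =>
      refine ⟨continuousOn_const, fun i => ?_⟩
      simpa using hfi i
  | cons j w ih =>
      have hint := ih.2 j
      have hcont : ContinuousOn (sigAux X a (j :: w)) (Icc a b) := by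
        have h := intervalIntegral.continuousOn_primitive_interval' hint
          (by rw [uIcc_of_le hab]; exact ⟨le_refl a, hab⟩)
        rw [uIcc_of_le hab] at h
        exact h
      refine ⟨hcont, fun i => ?_⟩
      exact (hfi i).continuousOn_mul
        (by rwa [uIcc_of_le hab] : ContinuousOn (sigAux X a (j :: w)) (Set.uIcc a b))

lemma sigAux_hasDerivAt (hab : a ≤ b) {E : Set ℝ} (hEfin : E.Finite)
    (hfi : ∀ i, IntervalIntegrable (fun s => deriv (fun u => X u i) s) volume a b)
    (hfc : ∀ i, ∀ s ∈ Ioo a b \ E, ContinuousAt (fun s => deriv (fun u => X u i) s) s)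
    (w : List (Fin d)) (i : Fin d) {s : ℝ} (hs : s ∈ Ioo a b \ E) :
    HasDerivAt (sigAux X a (i :: w)) (sigAux X a w s * deriv (fun u => X u i) s) s := by
  have hU : IsOpen (Ioo a b \ E) := isOpen_Ioo.sdiff hEfin.isClosed
  have hcw : ∀ r ∈ Ioo a b \ E,
      ContinuousAt (fun u => sigAux X a w u * deriv (fun v => X v i) u) r := by
    intro r hr
    have h1 : ContinuousAt (sigAux X a w) r :=
      ((sigAux_contOn_and_intInt hab hfi w).1).continuousAt (Icc_mem_nhds hr.1.1 hr.1.2)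
    exact h1.mul (hfc i r hr)
  have hmeas := ContinuousAt.stronglyMeasurableAtFilter (μ := volume) hU hcw s hs
  have hint : IntervalIntegrable (fun u => sigAux X a w u * deriv (fun v => X v i) u)
      volume a s := by
    refine ((sigAux_contOn_and_intInt hab hfi w).2 i).mono_set ?_
    rw [uIcc_of_le hab, uIcc_of_le hs.1.1.le]
    exact Icc_subset_Icc le_rfl hs.1.2.le
  exact intervalIntegral.integral_hasDerivAt_right hint hmeas (hcw s hs)

/-- Covering lemma: any point of `[a,b]` lies in a closed piece of the partition. -/
lemma exists_piece {n : ℕ} {t : Fin (n + 1) → ℝ} (hab : a < b) (ht0 : t 0 = a)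
    (htl : t (Fin.last n) = b) (hmono : StrictMono t) {T : ℝ} (hT : T ∈ Icc a b) :
    ∃ j : Fin n, t j.castSucc ≤ T ∧ T ≤ t j.succ := by
  have hn : 0 < n := by
    rcases Nat.eq_zero_or_pos n with h | h
    · subst h
      rw [show (0 : Fin 1) = Fin.last 0 from rfl, htl] at ht0
      exact absurd ht0.symm (ne_of_lt hab)
    · exact h
  classical
  set S : Finset (Fin (n + 1)) := Finset.univ.filter (fun i => t i ≤ T) with hS
  have hne : S.Nonempty := ⟨0, by simp [hS, ht0, hT.1]⟩
  set m := S.max' hne with hm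
  have hmT : t m ≤ T := by
    have := S.max'_mem hne
    simp [hS] at this; exact this
  by_cases hml : m = Fin.last n
  · have hTb : T = b := le_antisymm hT.2 (by rw [← htl, ← hml]; exact hmT)
    have hsucc : (Fin.succ (⟨n - 1, by omega⟩ : Fin n)) = Fin.last n := by
      apply Fin.ext; simp [Fin.last]; omega
    refine ⟨⟨n - 1, by omega⟩, ?_, ?_⟩
    · exact le_trans (hmono.monotone (Fin.le_last _)) (htl.trans hTb.symm).le
    · rw [hsucc, htl, hTb]
  · have hmv : m.val < n := Fin.val_lt_last hml
    refine ⟨⟨m.val, hmv⟩, ?_, ?_⟩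
    · have : (Fin.castSucc ⟨m.val, hmv⟩) = m := by
        apply Fin.ext; simp
      rw [this]; exact hmT
    · by_contra h
      push_neg at h
      have hmem : (Fin.succ ⟨m.val, hmv⟩ : Fin (n + 1)) ∈ S := by
        simp [hS]; exact h.le
      have hle := S.le_max' _ hmem
      rw [← hm] at hle
      have : m.val + 1 ≤ m.val := by
        have := (Fin.le_def).mp hle
        simpa using this
      omega

/-- If `H` is continuous on `[a,b]` and has zero derivative off the partition points,
then it is constant on `[a,b]`. -/
lemma const_of_deriv_zero {n : ℕ} {t : Fin (n + 1) → ℝ} (hab : a < b) (ht0 : t 0 = a)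
    (htl : t (Fin.last n) = b) (hmono : StrictMono t) {H : ℝ → ℝ}
    (hcont : ContinuousOn H (Icc a b))
    (hder : ∀ s ∈ Ioo a b \ range t, HasDerivAt H 0 s) :
    ∀ T ∈ Icc a b, H T = H a := by
  have piece : ∀ c d' : ℝ, a ≤ c → c ≤ d' → d' ≤ b → (∀ s ∈ Ioo c d', s ∉ range t) →
      H d' = H c := by
    intro c d' hac hcd hd'b hno
    have h0 : (∫ s in c..d', (0 : ℝ)) = H d' - H c := by
      apply intervalIntegral.integral_eq_sub_of_hasDeriv_right_of_le hcd
        (hcont.mono (Icc_subset_Icc hac hd'b))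
        (fun x hx => ?_) intervalIntegrable_const
      have hx' : x ∈ Ioo a b := ⟨lt_of_le_of_lt hac hx.1, lt_of_lt_of_le hx.2 hd'b⟩
      exact ((hder x ⟨hx', hno x hx⟩)).hasDerivWithinAt
    simp at h0
    linarith
  have chain : ∀ j : Fin (n + 1), H (t j) = H a := by
    intro j
    induction j using Fin.induction with
    | zero => rw [ht0]
    | succ j ih =>
        have hlt : t j.castSucc < t j.succ := hmono (Fin.castSucc_lt_succ : j.castSucc < j.succ)
        have hstep : H (t j.succ) = H (t j.castSucc) := by
          apply piece _ _ (ht0 ▸ hmono.monotone (Fin.zero_le _))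
            hlt.le (htl ▸ hmono.monotone (Fin.le_last _))
          rintro s hs ⟨k, rfl⟩
          have h1 : j.castSucc < k := hmono.lt_iff_lt.mp hs.1
          have h2 : k < j.succ := hmono.lt_iff_lt.mp hs.2
          simp [Fin.lt_def] at h1 h2
          omega
        rw [hstep, ih]
  intro T hT
  obtain ⟨j, hj1, hj2⟩ := exists_piece hab ht0 htl hmono hT
  have hstep : H T = H (t j.castSucc) := by
    apply piece _ _ (ht0 ▸ hmono.monotone (Fin.zero_le _)) hj1 hT.2
    rintro s hs ⟨k, rfl⟩
    have h1 : j.castSucc < k := hmono.lt_iff_lt.mp hs.1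
    have h2 : k < j.succ := hmono.lt_iff_lt.mp (lt_of_lt_of_le hs.2 hj2)
    simp [Fin.lt_def] at h1 h2
    omega
  rw [hstep, chain]

lemma hasDerivAt_list_sum {ι : Type*} (L : List ι) (F : ι → ℝ → ℝ) (F' : ι → ℝ) {s : ℝ}
    (h : ∀ z ∈ L, HasDerivAt (F z) (F' z) s) :
    HasDerivAt (fun u => (L.map (fun z => F z u)).sum) ((L.map F').sum) s := by
  induction L with
  | nil => simpa using hasDerivAt_const s (0 : ℝ)
  | cons z L ih =>
      simp only [List.map_cons, List.sum_cons]
      exact (h z List.mem_cons_self).add (ih fun z hz => h z (List.mem_cons_of_mem _ hz))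

lemma continuousOn_sig_list_sum (hab : a ≤ b)
    (hfi : ∀ i, IntervalIntegrable (fun s => deriv (fun u => X u i) s) volume a b)
    (L : List (List (Fin d))) :
    ContinuousOn (fun s => (L.map (fun z => sigAux X a z s)).sum) (Icc a b) := by
  induction L with
  | nil => simpa using continuousOn_const
  | cons z L ih =>
      simp only [List.map_cons, List.sum_cons]
      exact ((sigAux_contOn_and_intInt hab hfi z).1).add ih

/-- The main analytic lemma: the shuffle identity for `sigAux`. -/
lemma shuffle_sigAux (hab : a < b) {E : Set ℝ} (hEfin : E.Finite)
    (hfi : ∀ i, IntervalIntegrable (fun s => deriv (fun u => X u i) s) volume a b)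
    (hfc : ∀ i, ∀ s ∈ Ioo a b \ E, ContinuousAt (fun s => deriv (fun u => X u i) s) s)
    (hzero : ∀ H : ℝ → ℝ, ContinuousOn H (Icc a b) →
      (∀ s ∈ Ioo a b \ E, HasDerivAt H 0 s) → ∀ T ∈ Icc a b, H T = H a)
    (u v : List (Fin d)) : ∀ T ∈ Icc a b,
    ((shuffles u v).map (fun z => sigAux X a z T)).sum =
      sigAux X a u T * sigAux X a v T := by
  match u, v with
  | [], v => intro T hT; simp
  | x :: xs, [] => intro T hT; simp
  | x :: xs, y :: ys =>
      intro T hT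
      haveI : Inhabited (Fin d) := ⟨x⟩
      have IH1 := shuffle_sigAux hab hEfin hfi hfc hzero xs (y :: ys)
      have IH2 := shuffle_sigAux hab hEfin hfi hfc hzero (x :: xs) ys
      set L := shuffles (x :: xs) (y :: ys) with hL
      set H : ℝ → ℝ := fun s => sigAux X a (x :: xs) s * sigAux X a (y :: ys) s -
        (L.map (fun z => sigAux X a z s)).sum with hHdef
      have hcont : ContinuousOn H (Icc a b) :=
        (((sigAux_contOn_and_intInt hab.le hfi (x :: xs)).1).mul
          ((sigAux_contOn_and_intInt hab.le hfi (y :: ys)).1)).sub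
          (continuousOn_sig_list_sum hab.le hfi L)
      have hder : ∀ s ∈ Ioo a b \ E, HasDerivAt H 0 s := by
        intro s hs
        have hsI : s ∈ Icc a b := ⟨hs.1.1.le, hs.1.2.le⟩
        have hF := sigAux_hasDerivAt hab.le hEfin hfi hfc xs x hs
        have hG := sigAux_hasDerivAt hab.le hEfin hfi hfc ys y hs
        have hFG := hF.mul hG
        have hmem : ∀ z ∈ L, HasDerivAt (fun u => sigAux X a z u)
            (sigAux X a z.tail s * deriv (fun u => X u z.headI) s) s := by
          intro z hz
          rw [hL, shuffles_cons_cons] at hz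
          rcases List.mem_append.mp hz with h | h <;>
            obtain ⟨w, hw, rfl⟩ := List.mem_map.mp h
          · simpa using sigAux_hasDerivAt hab.le hEfin hfi hfc w x hs
          · simpa using sigAux_hasDerivAt hab.le hEfin hfi hfc w y hs
        have hLder := hasDerivAt_list_sum L (fun z u => sigAux X a z u)
          (fun z => sigAux X a z.tail s * deriv (fun u => X u z.headI) s) hmem
        have hsum : (L.map (fun z => sigAux X a z.tail s * deriv (fun u => X u z.headI) s)).sum
            = sigAux X a xs s * sigAux X a (y :: ys) s * deriv (fun u => X u x) s +
              sigAux X a (x :: xs) s * sigAux X a ys s * deriv (fun u => X u y) s := by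
          rw [hL, shuffles_cons_cons, List.map_append, List.sum_append, List.map_map,
            List.map_map]
          simp only [Function.comp_def, List.tail_cons, List.headI_cons]
          rw [List.sum_map_mul_right, List.sum_map_mul_right, IH1 s hsI, IH2 s hsI]
        have h0 := hFG.sub hLder
        exact h0.congr_deriv (by rw [hsum]; ring)
      have hHa : H a = 0 := by
        have hsum0 : (L.map (fun z => sigAux X a z a)).sum = 0 := by
          apply List.sum_eq_zero
          intro r hr
          obtain ⟨z, hz, rfl⟩ := List.mem_map.mp hr
          rw [hL, shuffles_cons_cons] at hz
          rcases List.mem_append.mp hz with h | h <;>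
            obtain ⟨w, hw, rfl⟩ := List.mem_map.mp h <;> simp
        simp [hHdef, hsum0]
      have hHT := hzero H hcont hder T hT
      rw [hHa] at hHT
      have : sigAux X a (x :: xs) T * sigAux X a (y :: ys) T -
          (L.map (fun z => sigAux X a z T)).sum = 0 := hHT
      linarith
  termination_by u.length + v.length

end Analytic

/-- Shuffle identity: for a continuous piecewise C¹ path, the signature pairing of a
shuffle of two words is the product of the signature pairings of the words. -/
theorem sig_shuffle_identity {d : ℕ} {a b : ℝ} (hab : a < b) (X : ℝ → Fin d → ℝ)
    (hX : PiecewiseC1 X a b) (w₁ w₂ : List (Fin d)) :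
    ((shuffles w₁ w₂).map (fun u => sig X a u b)).sum = sig X a w₁ b * sig X a w₂ b := by
  obtain ⟨hXc, n, t, ht0, htl, hmono, hC1⟩ := hX
  have hEfin : (Set.range t).Finite := Set.finite_range t
  have hcoord : ∀ (i : Fin d) (j : Fin n),
      ContDiffOn ℝ 1 (fun u => X u i) (Icc (t j.castSucc) (t j.succ)) := fun i j =>
    (ContinuousLinearMap.proj i : (Fin d → ℝ) →L[ℝ] ℝ).contDiff.comp_contDiffOn (hC1 j)
  have hpiece : ∀ (i : Fin d) (j : Fin n),
      IntervalIntegrable (fun s => deriv (fun u => X u i) s) volume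
        (t j.castSucc) (t j.succ) := by
    intro i j
    have hlt : t j.castSucc < t j.succ := hmono (Fin.castSucc_lt_succ : j.castSucc < j.succ)
    have h1 : ContinuousOn (derivWithin (fun u => X u i) (Icc (t j.castSucc) (t j.succ)))
        (Icc (t j.castSucc) (t j.succ)) :=
      (hcoord i j).continuousOn_derivWithin (uniqueDiffOn_Icc hlt) le_rfl
    have h2 : IntegrableOn (derivWithin (fun u => X u i) (Icc (t j.castSucc) (t j.succ)))
        (Icc (t j.castSucc) (t j.succ)) volume := h1.integrableOn_compact isCompact_Icc
    have h3 : IntegrableOn (fun s => deriv (fun u => X u i) s)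
        (Ioo (t j.castSucc) (t j.succ)) volume := by
      apply (h2.mono_set Ioo_subset_Icc_self).congr_fun ?_ measurableSet_Ioo
      exact fun x hx => derivWithin_of_mem_nhds (Icc_mem_nhds hx.1 hx.2)
    exact (intervalIntegrable_iff_integrableOn_Ioo_of_le hlt.le).mpr h3
  have hfi : ∀ i, IntervalIntegrable (fun s => deriv (fun u => X u i) s) volume a b := by
    intro i
    have hchain : ∀ k : Fin (n + 1),
        IntervalIntegrable (fun s => deriv (fun u => X u i) s) volume a (t k) := by
      intro k
      induction k using Fin.induction with
      | zero => rw [ht0]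
      | succ j ih => exact ih.trans (hpiece i j)
    have := hchain (Fin.last n)
    rwa [htl] at this
  have hfc : ∀ i, ∀ s ∈ Ioo a b \ Set.range t,
      ContinuousAt (fun s => deriv (fun u => X u i) s) s := by
    intro i s hs
    obtain ⟨j, hj1, hj2⟩ := exists_piece hab ht0 htl hmono (Ioo_subset_Icc_self hs.1)
    have hlt1 : t j.castSucc < s := lt_of_le_of_ne hj1 (fun h => hs.2 ⟨j.castSucc, h⟩)
    have hlt2 : s < t j.succ := lt_of_le_of_ne hj2 (fun h => hs.2 ⟨j.succ, h.symm⟩)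
    have h1 := ((hcoord i j).mono Ioo_subset_Icc_self).continuousOn_deriv_of_isOpen
      isOpen_Ioo le_rfl
    exact h1.continuousAt (isOpen_Ioo.mem_nhds ⟨hlt1, hlt2⟩)
  have hzero := fun H hcont hder =>
    const_of_deriv_zero hab ht0 htl hmono (H := H) hcont hder
  have key := shuffle_sigAux hab hEfin hfi hfc hzero w₁.reverse w₂.reverse b
    ⟨hab.le, le_rfl⟩
  have htrans : ((shuffles w₁ w₂).map (fun u => sigAux X a u.reverse b)).sum =
      ((shuffles w₁.reverse w₂.reverse).map (fun z => sigAux X a z b)).sum := by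
    have h := shuffles_reverse w₁ w₂
    calc ((shuffles w₁ w₂).map (fun u => sigAux X a u.reverse b)).sum
        = (Multiset.map (fun u => sigAux X a u.reverse b)
            (↑(shuffles w₁ w₂) : Multiset (List (Fin d)))).sum := by
          rw [Multiset.map_coe, Multiset.sum_coe]
      _ = (Multiset.map (fun z => sigAux X a z b)
            (Multiset.map List.reverse (↑(shuffles w₁ w₂) : Multiset (List (Fin d))))).sum := by
          rw [Multiset.map_map]; rfl
      _ = (Multiset.map (fun z => sigAux X a z b)
            (↑(shuffles w₁.reverse w₂.reverse) : Multiset (List (Fin d)))).sum := by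
          rw [Multiset.map_coe, h]
      _ = ((shuffles w₁.reverse w₂.reverse).map (fun z => sigAux X a z b)).sum := by
          rw [Multiset.map_coe, Multiset.sum_coe]
  simp only [sig]
  rw [htrans, key]
end

section
/- Let X : [a,b] → ℝ³ be a piecewise C¹ path that is Legendrian, i.e., Ẋ₁(t)·X₃(t) = Ẋ₂(t) for all t where the derivative exists. Then for every word w over {1,2,3}, the signature of X satisfies ⟨σ(X), 31w⟩ − ⟨σ(X), 2w⟩ + X₃(a)·⟨σ(X), 1w⟩ = 0. -/
open MeasureTheory Set intervalIntegral

/-- FTC and integrability of `deriv` on a subinterval of a `C¹` piece. -/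
lemma piece_ftc {d : ℕ} {X : ℝ → Fin d → ℝ} {p q : ℝ} (hpq : p < q)
    (hC : ContDiffOn ℝ 1 X (Set.Icc p q)) (j : Fin d) {c e : ℝ}
    (hpc : p ≤ c) (hce : c ≤ e) (heq : e ≤ q) :
    IntervalIntegrable (deriv fun u => X u j) volume c e ∧
      ∫ s in c..e, deriv (fun u => X u j) s = X e j - X c j := by
  have hsub : Set.Icc c e ⊆ Set.Icc p q := Set.Icc_subset_Icc hpc heq
  have hXj : ContDiffOn ℝ 1 (fun u => X u j) (Set.Icc p q) :=
    (ContinuousLinearMap.proj j : (Fin d → ℝ) →L[ℝ] ℝ).contDiff.comp_contDiffOn hC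
  have hu : UniqueDiffOn ℝ (Set.Icc p q) := uniqueDiffOn_Icc hpq
  have hdc : ContinuousOn (derivWithin (fun u => X u j) (Set.Icc p q)) (Set.Icc p q) :=
    hXj.continuousOn_derivWithin hu le_rfl
  have hIoo : ∀ x ∈ Set.Ioo c e, x ∈ Set.Ioo p q := fun x hx =>
    ⟨lt_of_le_of_lt hpc hx.1, lt_of_lt_of_le hx.2 heq⟩
  have hdiff : ∀ x ∈ Set.Ioo c e, DifferentiableAt ℝ (fun u => X u j) x := by
    intro x hx
    exact (hXj.differentiableOn one_ne_zero).differentiableAt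
      (Icc_mem_nhds (hIoo x hx).1 (hIoo x hx).2)
  have heqOn : Set.EqOn (derivWithin (fun u => X u j) (Set.Icc p q)) (deriv fun u => X u j)
      (Set.Ioo c e) := fun x hx =>
    derivWithin_of_mem_nhds (Icc_mem_nhds (hIoo x hx).1 (hIoo x hx).2)
  have hInt : IntervalIntegrable (deriv fun u => X u j) volume c e := by
    rw [intervalIntegrable_iff_integrableOn_Ioo_of_le hce]
    have h1 : IntegrableOn (derivWithin (fun u => X u j) (Set.Icc p q)) (Set.Ioo c e) volume :=
      ((hdc.mono hsub).integrableOn_Icc).mono_set Set.Ioo_subset_Icc_self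
    exact h1.congr_fun heqOn measurableSet_Ioo
  exact ⟨hInt, integral_eq_sub_of_hasDerivAt_of_le hce (hXj.continuousOn.mono hsub)
    (fun x hx => (hdiff x hx).hasDerivAt) hInt⟩

/-- FTC and integrability of `deriv` on `[a,t]` for a piecewise `C¹` path. -/
lemma global_ftc {d : ℕ} {X : ℝ → Fin d → ℝ} {a b : ℝ} (hX : PiecewiseC1 X a b) (j : Fin d) :
    ∀ t ∈ Set.Icc a b, IntervalIntegrable (deriv fun u => X u j) volume a t ∧
      ∫ s in a..t, deriv (fun u => X u j) s = X t j - X a j := by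
  obtain ⟨hcont, n, τ, hτ0, hτl, hτm, hτC⟩ := hX
  have key : ∀ m : Fin (n + 1), ∀ t ∈ Set.Icc a (τ m),
      IntervalIntegrable (deriv fun u => X u j) volume a t ∧
        ∫ s in a..t, deriv (fun u => X u j) s = X t j - X a j := by
    intro m
    induction m using Fin.induction with
    | zero =>
      intro t ht
      rw [hτ0] at ht
      have hta : t = a := le_antisymm ht.2 ht.1
      subst hta
      exact ⟨IntervalIntegrable.refl, by simp⟩
    | succ m ih =>
      intro t ht
      rcases le_or_gt t (τ m.castSucc) with h | h
      · exact ih t ⟨ht.1, h⟩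
      · have hmc : a ≤ τ m.castSucc := by rw [← hτ0]; exact hτm.monotone (Fin.zero_le _)
        have hlt : τ m.castSucc < τ m.succ := hτm (Fin.castSucc_lt_succ (i := m))
        have h1 := ih (τ m.castSucc) ⟨hmc, le_refl _⟩
        have h2 := piece_ftc hlt (hτC m) j (le_refl _) h.le ht.2
        refine ⟨h1.1.trans h2.1, ?_⟩
        rw [← intervalIntegral.integral_add_adjacent_intervals h1.1 h2.1, h1.2, h2.2]
        ring
  intro t ht
  exact key (Fin.last n) t (by rwa [hτl])

/-- Every point of `[τ 0, τ m]` lies in some piece. -/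
lemma piece_cover {n : ℕ} {τ : Fin (n + 1) → ℝ} (hτm : StrictMono τ) (hn : 0 < n) :
    ∀ m : Fin (n + 1), ∀ s ∈ Set.Icc (τ 0) (τ m),
      ∃ i : Fin n, s ∈ Set.Icc (τ i.castSucc) (τ i.succ) := by
  intro m
  induction m using Fin.induction with
  | zero =>
    intro s hs
    have hsτ : s = τ 0 := le_antisymm hs.2 hs.1
    subst hsτ
    refine ⟨⟨0, hn⟩, ?_, ?_⟩
    · have : (⟨0, hn⟩ : Fin n).castSucc = 0 := by ext; rfl
      rw [this]
    · exact hτm.monotone (Fin.zero_le _)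
  | succ m ih =>
    intro s hs
    rcases le_or_gt s (τ m.castSucc) with h | h
    · exact ih s ⟨hs.1, h⟩
    · exact ⟨m, h.le, hs.2⟩

/-- Continuity of iterated integrals and integrability of their products with `deriv`. -/
lemma sig_cont_int {d : ℕ} {X : ℝ → Fin d → ℝ} {a b : ℝ} (hab : a < b)
    (hX : PiecewiseC1 X a b) :
    ∀ v : List (Fin d), ContinuousOn (sigAux X a v) (Set.Icc a b) ∧
      ∀ j : Fin d,
        IntervalIntegrable (fun s => sigAux X a v s * deriv (fun u => X u j) s) volume a b := by
  intro v
  induction v with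
  | nil =>
    refine ⟨continuousOn_const, fun j => ?_⟩
    simp only [sigAux, one_mul]
    exact (global_ftc hX j b ⟨hab.le, le_rfl⟩).1
  | cons i v ih =>
    have hint := ih.2 i
    have hcontp : ContinuousOn (sigAux X a (i :: v)) (Set.Icc a b) := by
      have h := intervalIntegral.continuousOn_primitive_interval' hint
        (Set.left_mem_uIcc (a := a) (b := b))
      rw [Set.uIcc_of_le hab.le] at h
      exact h
    refine ⟨hcontp, fun j => ?_⟩
    exact ((global_ftc hX j b ⟨hab.le, le_rfl⟩).1).continuousOn_mul
      (by rw [Set.uIcc_of_le hab.le]; exact hcontp)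

lemma sig_append {d : ℕ} (X : ℝ → Fin d → ℝ) (a : ℝ) (u : List (Fin d)) (j : Fin d) (t : ℝ) :
    sig X a (u ++ [j]) t = ∫ s in a..t, sig X a u s * deriv (fun r => X r j) s := by
  simp [sig, List.reverse_append, sigAux]

/-- If `X : [a,b] → ℝ³` is a piecewise C¹ Legendrian path (i.e. `Ẋ₁ X₃ = Ẋ₂` wherever
the derivative exists), then `⟨σ(X), 31w⟩ − ⟨σ(X), 2w⟩ + X₃(a)⟨σ(X), 1w⟩ = 0` for
every word `w`. (Letters 1,2,3 are `0,1,2 : Fin 3`.) -/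
theorem legendrian_sig_relation {a b : ℝ} (hab : a < b) (X : ℝ → Fin 3 → ℝ)
    (hX : PiecewiseC1 X a b)
    (hLeg : ∀ t ∈ Set.Icc a b, DifferentiableAt ℝ X t →
      deriv (fun u => X u 0) t * X t 2 = deriv (fun u => X u 1) t) :
    ∀ w : List (Fin 3),
      sig X a (2 :: 0 :: w) b - sig X a (1 :: w) b + X a 2 * sig X a (0 :: w) b = 0 := by
  have claim : ∀ w : List (Fin 3), ∀ t ∈ Set.Icc a b,
      sig X a (2 :: 0 :: w) t - sig X a (1 :: w) t + X a 2 * sig X a (0 :: w) t = 0 := by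
    intro w
    induction w using List.reverseRecOn with
    | nil =>
      intro t ht
      obtain ⟨hcont, n, τ, hτ0, hτl, hτm, hτC⟩ := hX
      have hn : 0 < n := by
        rcases Nat.eq_zero_or_pos n with h | h
        · exfalso; subst h
          have : τ (Fin.last 0) = τ 0 := rfl
          rw [hτl, hτ0] at this
          exact absurd this (ne_of_gt hab)
        · exact h
      have hXpc : PiecewiseC1 X a b := ⟨hcont, n, τ, hτ0, hτl, hτm, hτC⟩
      have hg0 := global_ftc hXpc (0 : Fin 3)
      have hg1 := global_ftc hXpc (1 : Fin 3)
      have hg2 := global_ftc hXpc (2 : Fin 3)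
      -- a.e. Legendrian identity
      have hae : ∀ᵐ s ∂volume, s ∈ Set.uIoc a t →
          (X s 2 - X a 2) * deriv (fun u => X u 0) s =
            deriv (fun u => X u 1) s - X a 2 * deriv (fun u => X u 0) s := by
        have hfin : (volume : Measure ℝ) (Set.range τ) = 0 :=
          (Set.finite_range τ).measure_zero volume
        have hnm : ∀ᵐ s ∂volume, s ∉ Set.range τ := measure_eq_zero_iff_ae_notMem.mp hfin
        filter_upwards [hnm] with s hs hmem
        have hsIcc : s ∈ Set.Icc a b := by
          rw [Set.uIoc_of_le ht.1] at hmem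
          exact ⟨hmem.1.le, hmem.2.trans ht.2⟩
        obtain ⟨i, hi⟩ := piece_cover hτm hn (Fin.last n) s (by rw [hτ0, hτl]; exact hsIcc)
        have hioo : s ∈ Set.Ioo (τ i.castSucc) (τ i.succ) := by
          refine ⟨lt_of_le_of_ne hi.1 ?_, lt_of_le_of_ne hi.2 ?_⟩
          · exact fun h => hs ⟨i.castSucc, h⟩
          · exact fun h => hs ⟨i.succ, h.symm⟩
        have hdiff : DifferentiableAt ℝ X s :=
          ((hτC i).differentiableOn one_ne_zero).differentiableAt (Icc_mem_nhds hioo.1 hioo.2)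
        have hL := hLeg s hsIcc hdiff
        linear_combination hL
      -- compute the three signature coefficients
      have hs2 : ∀ s ∈ Set.Icc a b, sigAux X a [2] s = X s 2 - X a 2 := by
        intro s hs
        have : sigAux X a ([2] : List (Fin 3)) s
            = ∫ u in a..s, deriv (fun r => X r 2) u := by
          simp [sigAux]
        rw [this, (hg2 s hs).2]
      have e20 : sig X a ([2, 0] : List (Fin 3)) t
          = ∫ s in a..t, (X s 2 - X a 2) * deriv (fun u => X u 0) s := by
        have : sig X a ([2, 0] : List (Fin 3)) t
            = ∫ s in a..t, sigAux X a [2] s * deriv (fun u => X u 0) s := by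
          simp [sig, sigAux]
        rw [this]
        apply intervalIntegral.integral_congr
        intro s hsm
        have hsm' : s ∈ Set.Icc a b := by
          rw [Set.uIcc_of_le ht.1] at hsm
          exact ⟨hsm.1, hsm.2.trans ht.2⟩
        simp only [hs2 s hsm']
      have e1 : sig X a ([1] : List (Fin 3)) t = X t 1 - X a 1 := by
        have : sig X a ([1] : List (Fin 3)) t = ∫ s in a..t, deriv (fun r => X r 1) s := by
          simp [sig, sigAux]
        rw [this, (hg1 t ht).2]
      have e0 : sig X a ([0] : List (Fin 3)) t = X t 0 - X a 0 := by
        have : sig X a ([0] : List (Fin 3)) t = ∫ s in a..t, deriv (fun r => X r 0) s := by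
          simp [sig, sigAux]
        rw [this, (hg0 t ht).2]
      have e20' : sig X a ([2, 0] : List (Fin 3)) t
          = (X t 1 - X a 1) - X a 2 * (X t 0 - X a 0) := by
        rw [e20, intervalIntegral.integral_congr_ae hae,
          intervalIntegral.integral_sub (hg1 t ht).1 (((hg0 t ht).1).const_mul (X a 2)),
          intervalIntegral.integral_const_mul, (hg1 t ht).2, (hg0 t ht).2]
      show sig X a ([2, 0] : List (Fin 3)) t - sig X a ([1] : List (Fin 3)) t
          + X a 2 * sig X a ([0] : List (Fin 3)) t = 0
      rw [e20', e1, e0]; ring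
    | append_singleton w' j ih =>
      intro t ht
      have hsub : Set.uIcc a t ⊆ Set.Icc a b := by
        rw [Set.uIcc_of_le ht.1]
        exact Set.Icc_subset_Icc le_rfl ht.2
      have hmono : ∀ u : List (Fin 3),
          IntervalIntegrable (fun s => sig X a u s * deriv (fun r => X r j) s) volume a t := by
        intro u
        have h := (sig_cont_int hab hX u.reverse).2 j
        have : Set.uIcc a t ⊆ Set.uIcc a b := by
          rw [Set.uIcc_of_le ht.1, Set.uIcc_of_le hab.le]
          exact Set.Icc_subset_Icc le_rfl ht.2
        exact (h.mono_set this)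
      have r2 : (2 : Fin 3) :: 0 :: (w' ++ [j]) = ((2 : Fin 3) :: 0 :: w') ++ [j] := by simp
      have r1 : (1 : Fin 3) :: (w' ++ [j]) = ((1 : Fin 3) :: w') ++ [j] := by simp
      have r0 : (0 : Fin 3) :: (w' ++ [j]) = ((0 : Fin 3) :: w') ++ [j] := by simp
      rw [r2, r1, r0, sig_append, sig_append, sig_append,
        ← intervalIntegral.integral_const_mul,
        ← intervalIntegral.integral_sub (hmono _) (hmono _),
        ← intervalIntegral.integral_add ((hmono (2 :: 0 :: w')).sub (hmono (1 :: w')))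
          ((hmono (0 :: w')).const_mul (X a 2))]
      have hzero : Set.EqOn
          (fun s => sig X a (2 :: 0 :: w') s * deriv (fun r => X r j) s
            - sig X a (1 :: w') s * deriv (fun r => X r j) s
            + X a 2 * (sig X a (0 :: w') s * deriv (fun r => X r j) s))
          (fun _ => (0 : ℝ)) (Set.uIcc a t) := by
        intro s hsm
        have hsm' : s ∈ Set.Icc a b := hsub hsm
        have h := ih s hsm'
        simp only
        linear_combination deriv (fun r => X r j) s * h
      rw [intervalIntegral.integral_congr hzero]
      simp
  intro w
  exact claim w b ⟨hab.le, le_rfl⟩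
end

section
/- Let X : [a,b] → ℝ^d be a piecewise C¹ path and suppose there exist indices p, q, s ∈ {1,…,d} such that the projection t ↦ (X_p(t), X_q(t), X_s(t)) is Legendrian, i.e., Ẋ_p(t)·X_s(t) = Ẋ_q(t) wherever differentiable. Then ⟨σ(X), sp·w⟩ − ⟨σ(X), q·w⟩ + X_s(a)·⟨σ(X), p·w⟩ = 0 for every word w over {1,…,d}. -/
open MeasureTheory intervalIntegral Set

/-- FTC on a subinterval of a C¹ piece. -/
lemma ftc_piece {f : ℝ → ℝ} {c d u v : ℝ} (h : ContDiffOn ℝ 1 f (Set.Icc c d))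
    (hcu : c ≤ u) (huv : u ≤ v) (hvd : v ≤ d) :
    IntervalIntegrable (deriv f) MeasureTheory.volume u v ∧
      (∫ x in u..v, deriv f x) = f v - f u := by
  rcases huv.eq_or_lt with rfl | huv'
  · exact ⟨IntervalIntegrable.refl, by simp⟩
  have hcd : c < d := lt_of_le_of_lt hcu (lt_of_lt_of_le huv' hvd)
  set g := derivWithin f (Set.Icc c d) with hgdef
  have hg : ContinuousOn g (Set.Icc c d) :=
    h.continuousOn_derivWithin (uniqueDiffOn_Icc hcd) le_rfl
  have hdiff : ∀ x ∈ Set.Ioo c d, HasDerivAt f (deriv f x) x := fun x hx =>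
    (((h.differentiableOn one_ne_zero).differentiableAt (Icc_mem_nhds hx.1 hx.2))).hasDerivAt
  have heq : ∀ x ∈ Set.Ioo c d, g x = deriv f x := fun x hx =>
    derivWithin_of_mem_nhds (Icc_mem_nhds hx.1 hx.2)
  have hgint : IntervalIntegrable g volume u v := by
    apply (hg.mono ?_).intervalIntegrable
    rw [uIcc_of_le huv]
    exact Icc_subset_Icc hcu hvd
  have hrw : volume.restrict (Set.Ioc u v) = volume.restrict (Set.Ioo u v) :=
    (Measure.restrict_congr_set Ioo_ae_eq_Ioc).symm
  have hae : g =ᵐ[volume.restrict (Set.Ioc u v)] deriv f := by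
    rw [hrw]
    filter_upwards [ae_restrict_mem measurableSet_Ioo] with x hx
    exact heq x (Ioo_subset_Ioo hcu hvd hx)
  have hint : IntervalIntegrable (deriv f) volume u v := by
    rw [intervalIntegrable_iff_integrableOn_Ioc_of_le huv] at hgint ⊢
    exact hgint.congr_fun_ae hae
  exact ⟨hint, integral_eq_sub_of_hasDerivAt_of_le huv
    (h.continuousOn.mono (Icc_subset_Icc hcu hvd))
    (fun x hx => hdiff x (Ioo_subset_Ioo hcu hvd hx)) hint⟩

/-- Every point of `[t 0, t (last n)]` lies in some piece. -/
lemma exists_piece_s6 {n : ℕ} (hn : 0 < n) {tt : Fin (n + 1) → ℝ} (hmono : StrictMono tt)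
    {u : ℝ} (hu : u ∈ Set.Icc (tt 0) (tt (Fin.last n))) :
    ∃ k : Fin n, u ∈ Set.Icc (tt k.castSucc) (tt k.succ) := by
  classical
  set S : Finset (Fin (n + 1)) := Finset.univ.filter (fun j => tt j ≤ u) with hS
  have h0S : (0 : Fin (n + 1)) ∈ S := by simp [hS, hu.1]
  have hSne : S.Nonempty := ⟨0, h0S⟩
  set k := S.max' hSne with hk
  have hkmem : tt k ≤ u := by
    have h := S.max'_mem hSne
    simp only [hS, Finset.mem_filter] at h
    exact h.2
  by_cases hkl : (k : ℕ) < n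
  · refine ⟨⟨(k : ℕ), hkl⟩, ?_, ?_⟩
    · have hcast : (⟨(k : ℕ), hkl⟩ : Fin n).castSucc = k := by
        apply Fin.ext; simp
      rw [hcast]; exact hkmem
    · by_contra hcon
      push_neg at hcon
      have hmem2 : (⟨(k : ℕ), hkl⟩ : Fin n).succ ∈ S := by
        rw [hS]; simp only [Finset.mem_filter, Finset.mem_univ, true_and]
        exact hcon.le
      have hle := S.le_max' _ hmem2
      rw [← hk] at hle
      have : ((⟨(k : ℕ), hkl⟩ : Fin n).succ : ℕ) ≤ (k : ℕ) := hle
      simp at this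
  · have hkn : (k : ℕ) = n := by have := k.isLt; omega
    have hub : u = tt (Fin.last n) := by
      refine le_antisymm hu.2 ?_
      have : k = Fin.last n := Fin.ext (by simpa using hkn)
      rw [← this]; exact hkmem
    refine ⟨⟨n - 1, by omega⟩, ?_, ?_⟩
    · refine le_of_le_of_eq ?_ hub.symm
      exact hmono.monotone (Fin.le_last _)
    · have hsucc : (⟨n - 1, by omega⟩ : Fin n).succ = Fin.last n := by
        apply Fin.ext; simp; omega
      rw [hsucc, hub]

/-- FTC for a piecewise C¹ scalar function, up to any `t ∈ [a,b]`. -/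
lemma ftc_global {f : ℝ → ℝ} {a b : ℝ} (hab : a < b) {n : ℕ} {tt : Fin (n + 1) → ℝ}
    (h0 : tt 0 = a) (hlast : tt (Fin.last n) = b) (hmono : StrictMono tt)
    (hp : ∀ i : Fin n, ContDiffOn ℝ 1 f (Set.Icc (tt i.castSucc) (tt i.succ))) :
    ∀ t ∈ Set.Icc a b, IntervalIntegrable (deriv f) MeasureTheory.volume a t ∧
      (∫ x in a..t, deriv f x) = f t - f a := by
  have hn : 0 < n := by
    rcases Nat.eq_zero_or_pos n with h | h
    · exfalso; subst h
      have : tt 0 = tt (Fin.last 0) := by rfl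
      rw [h0, hlast] at this; exact absurd this (ne_of_lt hab)
    · exact h
  have key : ∀ j : Fin (n + 1), IntervalIntegrable (deriv f) volume a (tt j) ∧
      (∫ x in a..(tt j), deriv f x) = f (tt j) - f a := by
    intro j
    induction j using Fin.induction with
    | zero => rw [h0]; exact ⟨IntervalIntegrable.refl, by simp⟩
    | succ i ih =>
      obtain ⟨ih1, ih2⟩ := ih
      obtain ⟨h1, h2⟩ := ftc_piece (hp i) le_rfl (hmono (Fin.castSucc_lt_succ (i := i))).le le_rfl
      refine ⟨ih1.trans h1, ?_⟩
      rw [← intervalIntegral.integral_add_adjacent_intervals ih1 h1, ih2, h2]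
      ring
  intro t ht
  obtain ⟨k, hk1, hk2⟩ := exists_piece_s6 hn hmono (by rw [h0, hlast]; exact ht)
  obtain ⟨j1, j2⟩ := key k.castSucc
  obtain ⟨h1, h2⟩ := ftc_piece (hp k) le_rfl hk1 hk2
  refine ⟨j1.trans h1, ?_⟩
  rw [← intervalIntegral.integral_add_adjacent_intervals j1 h1, j2, h2]
  ring

/-- A continuous function times an interval integrable function is interval integrable. -/
lemma prod_integrable {g h : ℝ → ℝ} {a t : ℝ} (hat : a ≤ t)
    (hg : ContinuousOn g (Set.Icc a t)) (hh : IntervalIntegrable h MeasureTheory.volume a t) :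
    IntervalIntegrable (fun u => g u * h u) MeasureTheory.volume a t := by
  rw [intervalIntegrable_iff_integrableOn_Ioc_of_le hat] at hh ⊢
  obtain ⟨C, hC⟩ := isCompact_Icc.exists_bound_of_continuousOn hg
  refine Integrable.bdd_mul (c := C) hh ((hg.mono Ioc_subset_Icc_self).aestronglyMeasurable measurableSet_Ioc) ?_
  filter_upwards [ae_restrict_mem measurableSet_Ioc] with x hx
  exact hC x (Ioc_subset_Icc_self hx)

/-- If the projection `t ↦ (X_p(t), X_q(t), X_s(t))` of a piecewise C¹ path
`X : [a,b] → ℝ^d` is Legendrian (`Ẋ_p · X_s = Ẋ_q` wherever differentiable), then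
`⟨σ(X), sp·w⟩ − ⟨σ(X), q·w⟩ + X_s(a)·⟨σ(X), p·w⟩ = 0` for every word `w`. -/
theorem legendrian_projection_sig_relation {d : ℕ} {a b : ℝ} (hab : a < b)
    (X : ℝ → Fin d → ℝ) (hX : PiecewiseC1 X a b) (p q s : Fin d)
    (hLeg : ∀ t ∈ Set.Icc a b, DifferentiableAt ℝ X t →
      deriv (fun u => X u p) t * X t s = deriv (fun u => X u q) t) :
    ∀ w : List (Fin d),
      sig X a (s :: p :: w) b - sig X a (q :: w) b + X a s * sig X a (p :: w) b = 0 := by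
  obtain ⟨hcont, n, tt, h0, hlast, hmono, hp⟩ := hX
  have hn : 0 < n := by
    rcases Nat.eq_zero_or_pos n with h | h
    · exfalso; subst h
      have : tt 0 = tt (Fin.last 0) := by rfl
      rw [h0, hlast] at this; exact absurd this (ne_of_lt hab)
    · exact h
  -- coordinate pieces are C¹
  have hpi : ∀ (i : Fin d) (k : Fin n),
      ContDiffOn ℝ 1 (fun u => X u i) (Set.Icc (tt k.castSucc) (tt k.succ)) := by
    intro i k
    exact (ContinuousLinearMap.proj (R := ℝ) (φ := fun _ : Fin d => ℝ) i).contDiff.comp_contDiffOn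
      (hp k)
  -- FTC for coordinates
  have hftc : ∀ (i : Fin d), ∀ t ∈ Set.Icc a b,
      IntervalIntegrable (deriv (fun u => X u i)) volume a t ∧
      (∫ x in a..t, deriv (fun u => X u i) x) = X t i - X a i :=
    fun i => ftc_global hab h0 hlast hmono (hpi i)
  -- continuity of sigAux & integrability of products
  have hsig : ∀ l : List (Fin d), ContinuousOn (sigAux X a l) (Set.Icc a b) ∧
      ∀ t ∈ Set.Icc a b, ∀ i : Fin d,
        IntervalIntegrable (fun u => sigAux X a l u * deriv (fun v => X v i) u) volume a t := by
    intro l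
    induction l with
    | nil =>
      refine ⟨continuousOn_const, fun t ht i => ?_⟩
      exact prod_integrable ht.1 continuousOn_const ((hftc i t ht).1)
    | cons i' l ih =>
      have hc : ContinuousOn (sigAux X a (i' :: l)) (Set.Icc a b) := by
        have hint := ih.2 b ⟨hab.le, le_rfl⟩ i'
        have h2 := intervalIntegral.continuousOn_primitive_interval' hint
          (left_mem_uIcc (a := a) (b := b))
        rw [uIcc_of_le hab.le] at h2
        exact h2
      refine ⟨hc, fun t ht i => ?_⟩
      exact prod_integrable ht.1 (hc.mono (Icc_subset_Icc le_rfl ht.2)) ((hftc i t ht).1)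
  -- a.e. Legendrian on (a, b]
  have haeLeg : ∀ᵐ u, u ∈ Set.Ioc a b →
      deriv (fun v => X v p) u * X u s = deriv (fun v => X v q) u := by
    have hnull : volume (Set.range tt) = 0 := (Set.finite_range tt).measure_zero _
    filter_upwards [measure_eq_zero_iff_ae_notMem.mp hnull] with u hu hmem
    have huIcc : u ∈ Set.Icc a b := Ioc_subset_Icc_self hmem
    obtain ⟨k, hk⟩ := exists_piece_s6 hn hmono (by rw [h0, hlast]; exact huIcc)
    have hIoo : u ∈ Set.Ioo (tt k.castSucc) (tt k.succ) := by
      refine ⟨lt_of_le_of_ne hk.1 ?_, lt_of_le_of_ne hk.2 ?_⟩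
      · exact fun h => hu ⟨k.castSucc, h⟩
      · exact fun h => hu ⟨k.succ, h.symm⟩
    have hdiff : DifferentiableAt ℝ X u :=
      ((hp k).differentiableOn one_ne_zero).differentiableAt (Icc_mem_nhds hIoo.1 hIoo.2)
    exact hLeg u huIcc hdiff
  -- main induction
  have main : ∀ l : List (Fin d), ∀ t ∈ Set.Icc a b,
      sigAux X a (l ++ [p, s]) t =
        sigAux X a (l ++ [q]) t - X a s * sigAux X a (l ++ [p]) t := by
    intro l
    induction l with
    | nil =>
      intro t ht
      have hq : sigAux X a [q] t = X t q - X a q := by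
        show (∫ x in a..t, sigAux X a [] x * deriv (fun v => X v q) x) = _
        simp only [sigAux, one_mul]
        exact (hftc q t ht).2
      have hpp : sigAux X a [p] t = X t p - X a p := by
        show (∫ x in a..t, sigAux X a [] x * deriv (fun v => X v p) x) = _
        simp only [sigAux, one_mul]
        exact (hftc p t ht).2
      have hs1 : ∀ u ∈ Set.Icc a t, sigAux X a [s] u = X u s - X a s := by
        intro u hu
        show (∫ x in a..u, sigAux X a [] x * deriv (fun v => X v s) x) = _
        simp only [sigAux, one_mul]
        exact (hftc s u ⟨hu.1, hu.2.trans ht.2⟩).2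
      have step1 : sigAux X a ([] ++ [p, s]) t =
          ∫ u in a..t, (X u s - X a s) * deriv (fun v => X v p) u := by
        show (∫ u in a..t, sigAux X a [s] u * deriv (fun v => X v p) u) = _
        apply intervalIntegral.integral_congr
        intro u hu
        rw [uIcc_of_le ht.1] at hu
        dsimp only
        rw [hs1 u hu]
      have step2 : (∫ u in a..t, (X u s - X a s) * deriv (fun v => X v p) u) =
          ∫ u in a..t, (deriv (fun v => X v q) u - X a s * deriv (fun v => X v p) u) := by
        apply intervalIntegral.integral_congr_ae
        have hsub : Set.uIoc a t ⊆ Set.Ioc a b := by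
          rw [uIoc_of_le ht.1]
          exact Ioc_subset_Ioc le_rfl ht.2
        filter_upwards [haeLeg] with u hu hmem
        have := hu (hsub hmem)
        nlinarith [this]
      have step3 : (∫ u in a..t, (deriv (fun v => X v q) u - X a s * deriv (fun v => X v p) u)) =
          (X t q - X a q) - X a s * (X t p - X a p) := by
        rw [intervalIntegral.integral_sub (hftc q t ht).1 (((hftc p t ht).1).const_mul _),
          intervalIntegral.integral_const_mul, (hftc q t ht).2, (hftc p t ht).2]
      rw [step1, step2, step3]
      simp only [List.nil_append, hq, hpp]
    | cons i l ih =>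
      intro t ht
      have e1 : sigAux X a ((i :: l) ++ [p, s]) t =
          ∫ u in a..t, sigAux X a (l ++ [p, s]) u * deriv (fun v => X v i) u := rfl
      have e2 : sigAux X a ((i :: l) ++ [q]) t =
          ∫ u in a..t, sigAux X a (l ++ [q]) u * deriv (fun v => X v i) u := rfl
      have e3 : sigAux X a ((i :: l) ++ [p]) t =
          ∫ u in a..t, sigAux X a (l ++ [p]) u * deriv (fun v => X v i) u := rfl
      rw [e1, e2, e3]
      have step1 : (∫ u in a..t, sigAux X a (l ++ [p, s]) u * deriv (fun v => X v i) u) =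
          ∫ u in a..t, (sigAux X a (l ++ [q]) u * deriv (fun v => X v i) u
            - X a s * (sigAux X a (l ++ [p]) u * deriv (fun v => X v i) u)) := by
        apply intervalIntegral.integral_congr
        intro u hu
        rw [uIcc_of_le ht.1] at hu
        dsimp only
        rw [ih u ⟨hu.1, hu.2.trans ht.2⟩]
        ring
      rw [step1, intervalIntegral.integral_sub ((hsig (l ++ [q])).2 t ht i)
        ((((hsig (l ++ [p])).2 t ht i)).const_mul _), intervalIntegral.integral_const_mul]
  intro w
  have hb : b ∈ Set.Icc a b := ⟨hab.le, le_rfl⟩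
  have hmain := main w.reverse b hb
  have e1 : (s :: p :: w).reverse = w.reverse ++ [p, s] := by
    simp [List.reverse_cons, List.append_assoc]
  have e2 : (q :: w).reverse = w.reverse ++ [q] := by simp [List.reverse_cons]
  have e3 : (p :: w).reverse = w.reverse ++ [p] := by simp [List.reverse_cons]
  simp only [sig, e1, e2, e3]
  rw [hmain]
  ring
end

section
/- Let X : [a,b] → ℝ³ be a C¹ path with X₁(t) = t − a (so Ẋ₁ ≡ 1) and suppose for every word w, ⟨σ(X|[a,t]), 31w⟩ − ⟨σ(X|[a,t]), 2w⟩ + X₃(a)⟨σ(X|[a,t]), 1w⟩ = 0 for all t ∈ [a,b]. Applying this with w = ∅ gives ∫_a^t X₃(s) ds − X₃(a)(t−a) = X₂(t) − X₂(a) − X₃(a)(t−a) for all t; conclude that Ẋ₂(t) = X₃(t) for all t, i.e., X is Legendrian. -/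
open MeasureTheory Set Filter

/-- a.e. point of `Ioc a t` lies in `Ioo a b` when `t ≤ b`. -/
lemma aux_ae_mem_Ioo {a b t : ℝ} (ht : t ≤ b) :
    ∀ᵐ s ∂(volume : Measure ℝ), s ∈ Set.Ioc a t → s ∈ Set.Ioo a b := by
  have h2 : ∀ᵐ s ∂(volume : Measure ℝ), s ∉ ({b} : Set ℝ) :=
    measure_eq_zero_iff_ae_notMem.mp Real.volume_singleton
  filter_upwards [h2] with s hsb hs
  exact ⟨hs.1, lt_of_le_of_ne (hs.2.trans ht) (by simpa using hsb)⟩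

lemma aux_ae_mem_Ioo' {a b t : ℝ} (ht : t ≤ b) :
    ∀ᵐ s ∂(volume.restrict (Set.Ioc a t)), s ∈ Set.Ioo a b := by
  filter_upwards [ae_restrict_mem measurableSet_Ioc, ae_restrict_of_ae (aux_ae_mem_Ioo ht)]
    with s h1 h2
  exact h2 h1

lemma aux_contDiffOn {a b : ℝ} {X : ℝ → Fin 3 → ℝ} (hX : ContDiffOn ℝ 1 X (Set.Icc a b))
    (i : Fin 3) : ContDiffOn ℝ 1 (fun u => X u i) (Set.Icc a b) :=
  (ContinuousLinearMap.proj (R := ℝ) (φ := fun _ : Fin 3 => ℝ) i).contDiff.comp_contDiffOn hX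

/-- FTC for each coordinate. -/
lemma aux_ftc {a b : ℝ} (hab : a < b) {X : ℝ → Fin 3 → ℝ}
    (hX : ContDiffOn ℝ 1 X (Set.Icc a b)) (i : Fin 3) {t : ℝ} (ht : t ∈ Set.Icc a b) :
    ∫ s in a..t, deriv (fun u => X u i) s = X t i - X a i := by
  have hXi := aux_contDiffOn hX i
  have hud : UniqueDiffOn ℝ (Set.Icc a b) := uniqueDiffOn_Icc hab
  have hcontD : ContinuousOn (derivWithin (fun u => X u i) (Set.Icc a b)) (Set.Icc a b) :=
    hXi.continuousOn_derivWithin hud le_rfl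
  have hint : IntervalIntegrable (derivWithin (fun u => X u i) (Set.Icc a b)) volume a t := by
    apply ContinuousOn.intervalIntegrable
    apply hcontD.mono
    rw [Set.uIcc_of_le ht.1]
    exact Set.Icc_subset_Icc le_rfl ht.2
  have hcongr : ∫ s in a..t, deriv (fun u => X u i) s
      = ∫ s in a..t, derivWithin (fun u => X u i) (Set.Icc a b) s := by
    apply intervalIntegral.integral_congr_ae
    rw [Set.uIoc_of_le ht.1]
    filter_upwards [aux_ae_mem_Ioo (a := a) ht.2] with s hs hmem
    exact (derivWithin_of_mem_nhds (Icc_mem_nhds (hs hmem).1 (hs hmem).2)).symm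
  rw [hcongr]
  refine intervalIntegral.integral_eq_sub_of_hasDeriv_right_of_le ht.1
    (hXi.continuousOn.mono (Set.Icc_subset_Icc le_rfl ht.2)) (fun x hx => ?_) hint
  have hx' : x ∈ Set.Ioo a b := ⟨hx.1, hx.2.trans_le ht.2⟩
  have hmem : Set.Icc a b ∈ nhds x := Icc_mem_nhds hx'.1 hx'.2
  have hdiff : DifferentiableAt ℝ (fun u => X u i) x :=
    (hXi.differentiableOn one_ne_zero).differentiableAt hmem
  rw [derivWithin_of_mem_nhds hmem]
  exact hdiff.hasDerivAt.hasDerivWithinAt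

/-- If `X : [a,b] → ℝ³` is C¹ with `X₁(t) = t − a` and, for all `t ∈ [a,b]` and all words
`w`, `⟨σ(X|[a,t]), 31w⟩ − ⟨σ(X|[a,t]), 2w⟩ + X₃(a)⟨σ(X|[a,t]), 1w⟩ = 0`, then
`Ẋ₂(t) = X₃(t)` for all `t ∈ [a,b]`, i.e. `X` is Legendrian.
(Letters 1,2,3 are `0,1,2 : Fin 3`.) -/
theorem legendrian_of_sig_relations {a b : ℝ} (hab : a < b)
    (X : ℝ → Fin 3 → ℝ) (hX : ContDiffOn ℝ 1 X (Set.Icc a b))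
    (h0 : ∀ t ∈ Set.Icc a b, X t 0 = t - a)
    (hsig : ∀ t ∈ Set.Icc a b, ∀ w : List (Fin 3),
      sig X a (2 :: 0 :: w) t - sig X a (1 :: w) t + X a 2 * sig X a (0 :: w) t = 0) :
    ∀ t ∈ Set.Icc a b, derivWithin (fun u => X u 1) (Set.Icc a b) t = X t 2 := by
  have hamem : a ∈ Set.Icc a b := ⟨le_rfl, hab.le⟩
  have hcont2 : ContinuousOn (fun s => X s 2) (Set.Icc a b) := (aux_contDiffOn hX 2).continuousOn
  -- deriv of the 0-th coordinate is 1 on the interior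
  have hderiv0 : ∀ s ∈ Set.Ioo a b, deriv (fun u => X u 0) s = 1 := by
    intro s hs
    have hev : (fun u => X u 0) =ᶠ[nhds s] (fun u => u - a) := by
      filter_upwards [Ioo_mem_nhds hs.1 hs.2] with u hu
      exact h0 u (Set.Ioo_subset_Icc_self hu)
    rw [hev.deriv_eq]
    simp
  -- the key identity : X t 1 = X a 1 + ∫_a^t X s 2 ds
  have key : ∀ t ∈ Set.Icc a b, X t 1 = X a 1 + ∫ s in a..t, X s 2 := by
    intro t ht
    have hrel := hsig t ht []
    simp only [sig, List.reverse_cons, List.reverse_nil, List.nil_append, List.cons_append,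
      sigAux, one_mul] at hrel
    -- sig [0] t
    have hs0 : (∫ s in a..t, deriv (fun u => X u 0) s) = t - a := by
      rw [intervalIntegral.integral_congr_ae (g := fun _ => (1:ℝ))]
      · simp
      · rw [Set.uIoc_of_le ht.1]
        filter_upwards [aux_ae_mem_Ioo (a := a) ht.2] with s hs hmem
        rw [hderiv0 s (hs hmem)]
    -- sig [1] t
    have hs1 : (∫ s in a..t, deriv (fun u => X u 1) s) = X t 1 - X a 1 :=
      aux_ftc hab hX 1 ht
    -- sig [2,0] t
    have hs20 : (∫ s in a..t,
        (∫ u in a..s, deriv (fun v => X v 2) u) * deriv (fun u => X u 0) s)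
        = ∫ s in a..t, (X s 2 - X a 2) := by
      apply intervalIntegral.integral_congr_ae
      rw [Set.uIoc_of_le ht.1]
      filter_upwards [aux_ae_mem_Ioo (a := a) ht.2] with s hs hmem
      rw [hderiv0 s (hs hmem), mul_one]
      exact aux_ftc hab hX 2 (Set.Ioo_subset_Icc_self (hs hmem))
    rw [hs0, hs1, hs20] at hrel
    have hintint : IntervalIntegrable (fun s => X s 2) volume a t :=
      (hcont2.mono (Set.uIcc_subset_Icc hamem ht)).intervalIntegrable
    rw [intervalIntegral.integral_sub hintint intervalIntegrable_const,
      intervalIntegral.integral_const] at hrel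
    simp only [smul_eq_mul] at hrel
    linarith
  -- at interior points, derivWithin (X·1) = X·2
  have hinterior : ∀ t ∈ Set.Ioo a b,
      derivWithin (fun u => X u 1) (Set.Icc a b) t = X t 2 := by
    intro t ht
    have hmem : Set.Icc a b ∈ nhds t := Icc_mem_nhds ht.1 ht.2
    rw [derivWithin_of_mem_nhds hmem]
    have hG : HasDerivAt (fun u => X a 1 + ∫ s in a..u, X s 2) (X t 2) t := by
      refine HasDerivAt.const_add _ ?_
      refine intervalIntegral.integral_hasDerivAt_right
        ((hcont2.mono (Set.uIcc_subset_Icc hamem (Set.Ioo_subset_Icc_self ht))).intervalIntegrable)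
        ?_ (hcont2.continuousAt hmem)
      exact ⟨_, Ioo_mem_nhds ht.1 ht.2,
        ((hcont2.mono Set.Ioo_subset_Icc_self).aestronglyMeasurable measurableSet_Ioo)⟩
    have hXG : HasDerivAt (fun u => X u 1) (X t 2) t := by
      apply hG.congr_of_eventuallyEq
      filter_upwards [hmem] with u hu
      exact key u hu
    exact hXG.deriv
  -- extend to the closed interval by continuity
  intro t ht
  have hDcont : ContinuousOn (derivWithin (fun u => X u 1) (Set.Icc a b)) (Set.Icc a b) :=
    (aux_contDiffOn hX 1).continuousOn_derivWithin (uniqueDiffOn_Icc hab) le_rfl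
  have hne : (nhdsWithin t (Set.Ioo a b)).NeBot := by
    rw [← mem_closure_iff_nhdsWithin_neBot, closure_Ioo hab.ne]
    exact ht
  have h1 : Tendsto (derivWithin (fun u => X u 1) (Set.Icc a b)) (nhdsWithin t (Set.Ioo a b))
      (nhds (derivWithin (fun u => X u 1) (Set.Icc a b) t)) :=
    (hDcont t ht).mono_left (nhdsWithin_mono t Set.Ioo_subset_Icc_self)
  have h2 : Tendsto (derivWithin (fun u => X u 1) (Set.Icc a b)) (nhdsWithin t (Set.Ioo a b))
      (nhds (X t 2)) := by
    apply Tendsto.congr' _ ((hcont2 t ht).mono_left (nhdsWithin_mono t Set.Ioo_subset_Icc_self))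
    filter_upwards [self_mem_nhdsWithin] with s hs
    exact (hinterior s hs).symm
  exact tendsto_nhds_unique h1 h2
end
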